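/- Let G = ⟨a1,...,a_{2g}, f | f central, [a1,a2]···[a_{2g−1},a_{2g}] = f^{−e}⟩. If a generating 2g-tuple (y1,...,y_{2g}) of G projects under p : G → π1(S_g) to a tuple Nielsen equivalent to (ā1,...,ā_{2g}), then (y1,...,y_{2g}) is Nielsen equivalent in G to a tuple of the form (a1 f^{z1},...,a_{2g} f^{z_{2g}}) for some integers z1,...,z_{2g}. -/
import Mathlib


/-- An elementary Nielsen move on `n`-tuples of elements of a group `G`:
permute the entries, invert one entry, or replace an entry `gᵢ` by
`gᵢ * gⱼ^ε` for some `j ≠ i` and `ε = ±1`. -/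
inductive NielsenMove (G : Type*) [Group G] (n : ℕ) : (Fin n → G) → (Fin n → G) → Prop
  | perm (T : Fin n → G) (σ : Equiv.Perm (Fin n)) : NielsenMove G n T (T ∘ σ)
  | inv (T : Fin n → G) (i : Fin n) : NielsenMove G n T (Function.update T i (T i)⁻¹)
  | mul (T : Fin n → G) (i j : Fin n) (hij : i ≠ j) (ε : ℤ) (hε : ε = 1 ∨ ε = -1) :
      NielsenMove G n T (Function.update T i (T i * T j ^ ε))

/-- Nielsen equivalence: the equivalence relation generated by elementary Nielsen moves. -/
def NielsenEq (G : Type*) [Group G] (n : ℕ) : (Fin n → G) → (Fin n → G) → Prop :=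
  Relation.EqvGen (NielsenMove G n)

/-- The inverse of an elementary Nielsen move is an elementary Nielsen move. -/
lemma nielsenMove_symm {G : Type*} [Group G] {n : ℕ} {s t : Fin n → G}
    (h : NielsenMove G n s t) : NielsenMove G n t s := by
  cases h with
  | perm σ =>
    have hm := NielsenMove.perm (G := G) (n := n) (s ∘ ⇑σ) σ⁻¹
    have h2 : (s ∘ ⇑σ) ∘ ⇑(σ⁻¹) = s := by funext i; simp
    rwa [h2] at hm
  | inv i =>
    have hm := NielsenMove.inv (Function.update s i (s i)⁻¹) i
    have h2 : Function.update (Function.update s i (s i)⁻¹) i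
        ((Function.update s i (s i)⁻¹) i)⁻¹ = s := by
      funext k
      by_cases hk : k = i
      · subst hk; simp
      · simp [Function.update_of_ne hk]
    rwa [h2] at hm
  | mul i j hij ε hε =>
    have hm := NielsenMove.mul (Function.update s i (s i * s j ^ ε)) i j hij (-ε) (by omega)
    have h2 : Function.update (Function.update s i (s i * s j ^ ε)) i
        ((Function.update s i (s i * s j ^ ε)) i *
          (Function.update s i (s i * s j ^ ε)) j ^ (-ε)) = s := by
      funext k
      by_cases hk : k = i
      · subst hk
        simp [Function.update_of_ne (Ne.symm hij), mul_assoc]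
      · simp [Function.update_of_ne hk]
    rwa [h2] at hm

/-- An elementary Nielsen move downstairs lifts along a homomorphism. -/
lemma nielsenMove_lift {G Q : Type*} [Group G] [Group Q] {n : ℕ} (p : G →* Q)
    {s t : Fin n → Q} (h : NielsenMove Q n s t) (T : Fin n → G)
    (hT : (fun i => p (T i)) = s) :
    ∃ T', NielsenMove G n T T' ∧ (fun i => p (T' i)) = t := by
  cases h with
  | perm σ =>
    refine ⟨T ∘ σ, NielsenMove.perm T σ, ?_⟩
    funext i
    simpa using congrFun hT (σ i)
  | inv i =>
    refine ⟨_, NielsenMove.inv T i, ?_⟩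
    subst hT
    funext k
    by_cases hk : k = i
    · subst hk; simp
    · simp [Function.update_of_ne hk]
  | mul i j hij ε hε =>
    refine ⟨_, NielsenMove.mul T i j hij ε hε, ?_⟩
    subst hT
    funext k
    by_cases hk : k = i
    · subst hk; simp
    · simp [Function.update_of_ne hk]

lemma nielsenEq_lift {G Q : Type*} [Group G] [Group Q] {n : ℕ} (p : G →* Q)
    {s t : Fin n → Q} (h : Relation.EqvGen (NielsenMove Q n) s t) :
    (∀ T : Fin n → G, (fun i => p (T i)) = s →
      ∃ T', NielsenEq G n T T' ∧ (fun i => p (T' i)) = t) ∧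
    (∀ T : Fin n → G, (fun i => p (T i)) = t →
      ∃ T', NielsenEq G n T T' ∧ (fun i => p (T' i)) = s) := by
  induction h with
  | rel s t hm =>
    constructor
    · intro T hT
      obtain ⟨T', hm', hT'⟩ := nielsenMove_lift p hm T hT
      exact ⟨T', Relation.EqvGen.rel _ _ hm', hT'⟩
    · intro T hT
      obtain ⟨T', hm', hT'⟩ := nielsenMove_lift p (nielsenMove_symm hm) T hT
      exact ⟨T', Relation.EqvGen.rel _ _ hm', hT'⟩
  | refl s =>
    exact ⟨fun T hT => ⟨T, Relation.EqvGen.refl T, hT⟩,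
           fun T hT => ⟨T, Relation.EqvGen.refl T, hT⟩⟩
  | symm s t _ ih => exact ⟨ih.2, ih.1⟩
  | trans s t u _ _ ih1 ih2 =>
    constructor
    · intro T hT
      obtain ⟨T1, h1, hT1⟩ := ih1.1 T hT
      obtain ⟨T2, h2, hT2⟩ := ih2.1 T1 hT1
      exact ⟨T2, Relation.EqvGen.trans _ _ _ h1 h2, hT2⟩
    · intro T hT
      obtain ⟨T1, h1, hT1⟩ := ih2.2 T hT
      obtain ⟨T2, h2, hT2⟩ := ih1.2 T1 hT1
      exact ⟨T2, Relation.EqvGen.trans _ _ _ h1 h2, hT2⟩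

/-- If `p : G → Q` kills exactly the central cyclic subgroup `⟨f⟩`, and a generating
tuple `y` of `G` projects to a tuple Nielsen equivalent to the projection of `a`,
then `y` is Nielsen equivalent to `(a₁ f^{z₁}, …, aₙ f^{zₙ})` for some integers `zᵢ`. -/
theorem nielsenEq_lift_to_fiber_powers {G Q : Type*} [Group G] [Group Q] (n : ℕ)
    (p : G →* Q) (hsurj : Function.Surjective p) (f : G)
    (hf : f ∈ Subgroup.center G) (hker : p.ker = Subgroup.zpowers f)
    (a y : Fin n → G)
    (hgen : Subgroup.closure (Set.range y) = ⊤)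
    (h : NielsenEq Q n (fun i => p (y i)) (fun i => p (a i))) :
    ∃ z : Fin n → ℤ, NielsenEq G n y (fun i => a i * f ^ z i) := by
  obtain ⟨T', hEq, hproj⟩ := (nielsenEq_lift p h).1 y rfl
  have hz : ∀ i, ∃ z : ℤ, f ^ z = (a i)⁻¹ * T' i := by
    intro i
    have hmem : (a i)⁻¹ * T' i ∈ p.ker := by
      have := congrFun hproj i
      simp [MonoidHom.mem_ker, this]
    rw [hker, Subgroup.mem_zpowers_iff] at hmem
    exact hmem
  choose z hzeq using hz
  refine ⟨z, ?_⟩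
  have : (fun i => a i * f ^ z i) = T' := by
    funext i
    rw [hzeq i, mul_inv_cancel_left]
  rwa [this]
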